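/- Let $\ell: \mathbb{R} \to \mathbb{R}$ be twice continuously differentiable with $\ell'' > 0$ continuous, let $V$ be a real random variable with $v_1 := \mathbb{E}[|V|] < \infty$, let $X$ be a $d$-dimensional random vector satisfying $\mathbb{E}[\langle X,z\rangle^4]^{1/4} \leq L_X \mathbb{E}[\langle X,z\rangle^2]^{1/2}$ for all $z$, and define $\varepsilon := \min\{\ell''(u) : |u| \leq 8 L_X^4 v_1\} > 0$. Then for every $z \in \mathbb{R}^d$: $\mathbb{E}[\ell''(V)\langle X,z\rangle^2] \geq \frac{\varepsilon}{16 L_X^4}\, \mathbb{E}[\langle X,z\rangle^2]$. -/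

import Mathlib

open MeasureTheory ProbabilityTheory Matrix
open scoped ENNReal

/-- Cauchy–Schwarz for the set integral of a square. -/
lemma portfolio_cs_aux {Ω : Type*} [MeasureSpace Ω] [IsProbabilityMeasure (ℙ : Measure Ω)]
    {Y : Ω → ℝ} (hY4 : MemLp Y 4 ℙ) {B : Set Ω} (hB : MeasurableSet B) :
    ∫ ω in B, Y ω ^ 2 ∂ℙ
      ≤ (∫ ω, Y ω ^ 4 ∂ℙ) ^ ((1:ℝ)/2) * (((ℙ : Measure Ω) B).toReal) ^ ((1:ℝ)/2) := by
  have hsq : (fun ω => ‖Y ω‖ ^ ENNReal.toReal 2) = fun ω => Y ω ^ 2 := by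
    funext ω
    rw [ENNReal.toReal_ofNat, Real.norm_eq_abs, Real.rpow_two, sq_abs]
  have hf : MemLp (fun ω => Y ω ^ 2) (ENNReal.ofReal 2) ℙ := by
    have h := hY4.norm_rpow_div 2
    rw [show (4 : ℝ≥0∞) / 2 = 2 by rw [eq_comm, ENNReal.eq_div_iff] <;> norm_num, hsq] at h
    rwa [show (ENNReal.ofReal 2) = (2 : ℝ≥0∞) by norm_num]
  have hg : MemLp (B.indicator (fun _ => (1:ℝ))) (ENNReal.ofReal 2) ℙ :=
    (memLp_const 1).indicator hB
  have H := integral_mul_norm_le_Lp_mul_Lq (f := fun ω => Y ω ^ 2)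
    (g := B.indicator (fun _ => (1:ℝ))) (μ := ℙ)
    Real.HolderConjugate.two_two hf hg
  have e1 : (fun ω => ‖Y ω ^ 2‖ * ‖B.indicator (fun _ => (1:ℝ)) ω‖)
      = B.indicator (fun ω => Y ω ^ 2) := by
    funext ω
    by_cases h : ω ∈ B <;>
      simp [h, Real.norm_eq_abs, abs_of_nonneg (sq_nonneg (Y ω))]
  have e2 : (fun ω => ‖Y ω ^ 2‖ ^ (2:ℝ)) = fun ω => Y ω ^ 4 := by
    funext ω
    rw [Real.norm_eq_abs, abs_of_nonneg (sq_nonneg _), Real.rpow_two]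
    ring
  have e3 : (fun ω => ‖B.indicator (fun _ => (1:ℝ)) ω‖ ^ (2:ℝ))
      = B.indicator (fun _ => (1:ℝ)) := by
    funext ω
    by_cases h : ω ∈ B <;> simp [h, Real.zero_rpow]
  rw [e1, e2, e3, integral_indicator hB, integral_indicator hB, setIntegral_const] at H
  simpa [measureReal_def] using H

/-- Lower bound in the norm-equivalence lemma for portfolio optimization:
`E[ℓ''(V)⟨X,z⟩²] ≥ (ε/(16 L_X⁴)) E[⟨X,z⟩²]`, where
`ε = min {ℓ''(u) : |u| ≤ 8 L_X⁴ E|V|} > 0`. -/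
theorem portfolio_norm_lower_bound
    {Ω : Type*} [MeasureSpace Ω] [IsProbabilityMeasure (ℙ : Measure Ω)]
    {d : ℕ} (ℓ dℓ ddℓ : ℝ → ℝ)
    (hderiv1 : ∀ t, HasDerivAt ℓ (dℓ t) t)
    (hderiv2 : ∀ t, HasDerivAt dℓ (ddℓ t) t)
    (hcont : Continuous ddℓ) (hpos : ∀ t, 0 < ddℓ t)
    (V : Ω → ℝ) (hVmeas : Measurable V) (hVint : Integrable V ℙ)
    (X : Ω → Fin d → ℝ) (hXmeas : Measurable X)
    (LX : ℝ) (hLX : 1 ≤ LX)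
    (hL4 : ∀ z : Fin d → ℝ, MemLp (fun ω => X ω ⬝ᵥ z) 4 ℙ)
    (hne : ∀ z : Fin d → ℝ,
      (∫ ω, (X ω ⬝ᵥ z) ^ 4 ∂ℙ) ^ ((1 : ℝ) / 4)
        ≤ LX * (∫ ω, (X ω ⬝ᵥ z) ^ 2 ∂ℙ) ^ ((1 : ℝ) / 2))
    (v₁ : ℝ) (hv₁ : v₁ = ∫ ω, |V ω| ∂ℙ)
    (hint : ∀ z : Fin d → ℝ, Integrable (fun ω => ddℓ (V ω) * (X ω ⬝ᵥ z) ^ 2) ℙ)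
    (ε : ℝ)
    (hε : ε = sInf (ddℓ '' Set.Icc (-(8 * LX ^ 4 * v₁)) (8 * LX ^ 4 * v₁))) :
    0 < ε ∧
    ∀ z : Fin d → ℝ,
      ε / (16 * LX ^ 4) * ∫ ω, (X ω ⬝ᵥ z) ^ 2 ∂ℙ
        ≤ ∫ ω, ddℓ (V ω) * (X ω ⬝ᵥ z) ^ 2 ∂ℙ := by
  have hv₁0 : 0 ≤ v₁ := by
    rw [hv₁]; exact integral_nonneg fun ω => abs_nonneg _
  have hLX0 : (0:ℝ) < LX := lt_of_lt_of_le one_pos hLX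
  have hLX4 : (0:ℝ) < LX ^ 4 := by positivity
  have hc0 : 0 ≤ 8 * LX ^ 4 * v₁ := by positivity
  have hKne : (Set.Icc (-(8 * LX ^ 4 * v₁)) (8 * LX ^ 4 * v₁)).Nonempty :=
    ⟨0, by constructor <;> linarith⟩
  obtain ⟨u0, hu0, hmin⟩ := isCompact_Icc.exists_sInf_image_eq hKne hcont.continuousOn
  have hε_pos : 0 < ε := by rw [hε, hmin]; exact hpos u0
  refine ⟨hε_pos, fun z => ?_⟩
  have hεle : ∀ t : ℝ, |t| ≤ 8 * LX ^ 4 * v₁ → ε ≤ ddℓ t := by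
    intro t ht
    rw [hε]
    refine csInf_le ⟨0, ?_⟩ ⟨t, ⟨(abs_le.mp ht).1, (abs_le.mp ht).2⟩, rfl⟩
    rintro y ⟨u, -, rfl⟩; exact (hpos u).le
  set Y : Ω → ℝ := fun ω => X ω ⬝ᵥ z with hYdef
  show ε / (16 * LX ^ 4) * ∫ ω, Y ω ^ 2 ∂ℙ ≤ ∫ ω, ddℓ (V ω) * Y ω ^ 2 ∂ℙ
  have hYmeas : Measurable Y := by
    have hh : Y = fun ω => ∑ i, X ω i * z i := by
      funext ω; simp [hYdef, dotProduct]
    rw [hh]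
    exact Finset.measurable_sum _ fun i _ =>
      ((measurable_pi_apply i).comp hXmeas).mul measurable_const
  have hY4 : MemLp Y 4 ℙ := hL4 z
  have hY2 : MemLp Y 2 ℙ := hY4.mono_exponent (by norm_num)
  have intY2 : Integrable (fun ω => Y ω ^ 2) ℙ := hY2.integrable_sq
  set S2 : ℝ := ∫ ω, Y ω ^ 2 ∂ℙ with hS2def
  set S4 : ℝ := ∫ ω, Y ω ^ 4 ∂ℙ with hS4def
  have hS2nn : 0 ≤ S2 := integral_nonneg fun ω => sq_nonneg _
  have hS4nn : 0 ≤ S4 := integral_nonneg fun ω => by positivity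
  have hintnn : 0 ≤ ∫ ω, ddℓ (V ω) * Y ω ^ 2 ∂ℙ :=
    integral_nonneg fun ω => mul_nonneg (hpos _).le (sq_nonneg _)
  rcases eq_or_lt_of_le hS2nn with hS2z | hS2pos
  · rw [← hS2z, mul_zero]
    exact hintnn
  -- fourth moment bound
  have hS4le : S4 ≤ LX ^ 4 * S2 ^ 2 := by
    have h := hne z
    have h4 := pow_le_pow_left₀ (Real.rpow_nonneg hS4nn _) h 4
    calc S4 = (S4 ^ ((1:ℝ)/4)) ^ 4 := by
          rw [← Real.rpow_natCast (S4 ^ ((1:ℝ)/4)) 4, ← Real.rpow_mul hS4nn]; norm_num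
      _ ≤ (LX * S2 ^ ((1:ℝ)/2)) ^ 4 := h4
      _ = LX ^ 4 * ((S2 ^ ((1:ℝ)/2)) ^ 4) := by ring
      _ = LX ^ 4 * S2 ^ 2 := by
          rw [← Real.rpow_natCast (S2 ^ ((1:ℝ)/2)) 4, ← Real.rpow_mul hS2nn]
          norm_num
  -- events
  set B : Set Ω := {ω | S2 / 2 ≤ Y ω ^ 2} with hBdef
  have hB : MeasurableSet B := measurableSet_le measurable_const (hYmeas.pow_const 2)
  set C : Set Ω := {ω | |V ω| ≤ 8 * LX ^ 4 * v₁} with hCdef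
  have hC : MeasurableSet C := measurableSet_le hVmeas.abs measurable_const
  set pB : ℝ := ((ℙ : Measure Ω) B).toReal with hpBdef
  have hpBnn : 0 ≤ pB := ENNReal.toReal_nonneg
  have hpBle1 : pB ≤ 1 := by
    rw [hpBdef]
    exact ENNReal.toReal_le_of_le_ofReal one_pos.le (by simpa using prob_le_one)
  -- Paley–Zygmund
  have hsplit : (∫ ω in B, Y ω ^ 2 ∂ℙ) + (∫ ω in Bᶜ, Y ω ^ 2 ∂ℙ) = S2 :=
    integral_add_compl hB intY2
  have hBcle : ∫ ω in Bᶜ, Y ω ^ 2 ∂ℙ ≤ S2 / 2 := by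
    have h1 : ∫ ω in Bᶜ, Y ω ^ 2 ∂ℙ ≤ ∫ _ω in Bᶜ, S2 / 2 ∂ℙ := by
      refine setIntegral_mono_on intY2.integrableOn
        (integrableOn_const (measure_ne_top _ _)) hB.compl ?_
      intro ω hω
      exact le_of_not_ge (by simpa [hBdef] using hω)
    have h2 : ∫ _ω in Bᶜ, S2 / 2 ∂ℙ = ((ℙ : Measure Ω) Bᶜ).toReal * (S2 / 2) := by
      rw [setIntegral_const, smul_eq_mul, measureReal_def]
    have h3 : ((ℙ : Measure Ω) Bᶜ).toReal ≤ 1 :=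
      ENNReal.toReal_le_of_le_ofReal one_pos.le (by simpa using prob_le_one)
    have h4 : ((ℙ : Measure Ω) Bᶜ).toReal * (S2 / 2) ≤ S2 / 2 := by
      nlinarith [ENNReal.toReal_nonneg (a := (ℙ : Measure Ω) Bᶜ)]
    linarith
  have hCS := portfolio_cs_aux hY4 hB
  have hpB : 1 / (4 * LX ^ 4) ≤ pB := by
    have h1 : S2 / 2 ≤ S4 ^ ((1:ℝ)/2) * pB ^ ((1:ℝ)/2) := by linarith
    have h2 : (S2 / 2) ^ 2 ≤ (S4 ^ ((1:ℝ)/2) * pB ^ ((1:ℝ)/2)) ^ 2 :=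
      pow_le_pow_left₀ (by linarith) h1 2
    have h3 : (S4 ^ ((1:ℝ)/2) * pB ^ ((1:ℝ)/2)) ^ 2 = S4 * pB := by
      rw [mul_pow, ← Real.rpow_natCast (S4 ^ ((1:ℝ)/2)) 2,
        ← Real.rpow_natCast (pB ^ ((1:ℝ)/2)) 2, ← Real.rpow_mul hS4nn,
        ← Real.rpow_mul hpBnn]
      norm_num
    rw [h3] at h2
    rw [div_le_iff₀ (by positivity)]
    nlinarith [mul_le_mul_of_nonneg_right hS4le hpBnn, mul_pos hS2pos hS2pos]
  -- Markov
  have hCc : ((ℙ : Measure Ω) Cᶜ).toReal ≤ 1 / (8 * LX ^ 4) := by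
    rcases eq_or_lt_of_le hv₁0 with hv0 | hvpos
    · have hint0 : ∫ ω, |V ω| ∂ℙ = 0 := by rw [← hv₁, ← hv0]
      have hae : (fun ω => |V ω|) =ᵐ[ℙ] 0 :=
        (integral_eq_zero_iff_of_nonneg (fun ω => abs_nonneg _) hVint.abs).mp hint0
      have hzero : (ℙ : Measure Ω) Cᶜ = 0 := by
        rw [measure_eq_zero_iff_ae_notMem]
        filter_upwards [hae] with ω hω
        intro hmem
        refine hmem ?_
        show |V ω| ≤ 8 * LX ^ 4 * v₁
        simp only [Pi.zero_apply] at hω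
        rw [hω]
        positivity
      rw [hzero]
      simp only [ENNReal.toReal_zero]
      positivity
    · have hM := mul_meas_ge_le_integral_of_nonneg (μ := ℙ)
        (f := fun ω => |V ω|) (Filter.Eventually.of_forall fun ω => abs_nonneg _)
        hVint.abs (8 * LX ^ 4 * v₁)
      rw [← hv₁, measureReal_def] at hM
      have hsub : Cᶜ ⊆ {ω | 8 * LX ^ 4 * v₁ ≤ |V ω|} := by
        intro ω hω
        exact (lt_of_not_ge (by simpa [hCdef] using hω)).le
      have hmono : ((ℙ : Measure Ω) Cᶜ).toReal
          ≤ ((ℙ : Measure Ω) {ω | 8 * LX ^ 4 * v₁ ≤ |V ω|}).toReal :=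
        ENNReal.toReal_mono (measure_ne_top _ _) (measure_mono hsub)
      have hcpos : 0 < 8 * LX ^ 4 * v₁ := by positivity
      have : ((ℙ : Measure Ω) {ω | 8 * LX ^ 4 * v₁ ≤ |V ω|}).toReal
          ≤ v₁ / (8 * LX ^ 4 * v₁) := by
        rw [le_div_iff₀ hcpos]
        linarith
      have heq : v₁ / (8 * LX ^ 4 * v₁) = 1 / (8 * LX ^ 4) := by
        field_simp
      linarith
  -- intersection probability
  have hBsub : B ⊆ (B ∩ C) ∪ Cᶜ := by
    intro ω hω
    by_cases h : ω ∈ C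
    · exact Or.inl ⟨hω, h⟩
    · exact Or.inr h
  have hunion : pB ≤ ((ℙ : Measure Ω) (B ∩ C)).toReal + ((ℙ : Measure Ω) Cᶜ).toReal := by
    have h1 : (ℙ : Measure Ω) B ≤ (ℙ : Measure Ω) (B ∩ C) + (ℙ : Measure Ω) Cᶜ :=
      le_trans (measure_mono hBsub) (measure_union_le _ _)
    have h2 := ENNReal.toReal_mono
      (ENNReal.add_ne_top.mpr ⟨measure_ne_top _ _, measure_ne_top _ _⟩) h1
    rwa [ENNReal.toReal_add (measure_ne_top _ _) (measure_ne_top _ _)] at h2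
  have hpA : 1 / (8 * LX ^ 4) ≤ ((ℙ : Measure Ω) (B ∩ C)).toReal := by
    have heq : 1 / (4 * LX ^ 4) - 1 / (8 * LX ^ 4) = 1 / (8 * LX ^ 4) := by
      field_simp; ring
    linarith
  -- final chain
  have hA : MeasurableSet (B ∩ C) := hB.inter hC
  have hmono1 : ∫ ω in B ∩ C, ddℓ (V ω) * Y ω ^ 2 ∂ℙ ≤ ∫ ω, ddℓ (V ω) * Y ω ^ 2 ∂ℙ :=
    setIntegral_le_integral (hint z)
      (Filter.Eventually.of_forall fun ω => mul_nonneg (hpos _).le (sq_nonneg _))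
  have hmono2 : ((ℙ : Measure Ω) (B ∩ C)).toReal * (ε * (S2 / 2))
      ≤ ∫ ω in B ∩ C, ddℓ (V ω) * Y ω ^ 2 ∂ℙ := by
    have h1 : ∫ _ω in B ∩ C, ε * (S2 / 2) ∂ℙ
        ≤ ∫ ω in B ∩ C, ddℓ (V ω) * Y ω ^ 2 ∂ℙ := by
      refine setIntegral_mono_on
        (integrableOn_const (measure_ne_top _ _))
        ((hint z).integrableOn) hA ?_
      intro ω hω
      exact mul_le_mul (hεle _ hω.2) hω.1 (by linarith) (hpos _).le
    rwa [setIntegral_const, smul_eq_mul, measureReal_def] at h1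
  calc ε / (16 * LX ^ 4) * S2 = 1 / (8 * LX ^ 4) * (ε * (S2 / 2)) := by
        field_simp; ring
    _ ≤ ((ℙ : Measure Ω) (B ∩ C)).toReal * (ε * (S2 / 2)) := by
        apply mul_le_mul_of_nonneg_right hpA
        positivity
    _ ≤ ∫ ω in B ∩ C, ddℓ (V ω) * Y ω ^ 2 ∂ℙ := hmono2
    _ ≤ ∫ ω, ddℓ (V ω) * Y ω ^ 2 ∂ℙ := hmono1
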